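/- For any simple integer-weighted directed graph with n vertices and total (net) arc weight m_w = ∑_{i,j} w_{ij}, the normalized spread of its Laplacian eigenvalues satisfies σ² ≥ (1/(n-1)²)[m_w - (n-1)κ_w][(n-1)(κ_w + 1) - m_w] where κ_w = ⌊m_w/(n-1)⌋, with equality if and only if the Laplacian spectrum is {0, κ_w with multiplicity (n-1)(κ_w+1) - m_w, κ_w + 1 with multiplicity m_w - (n-1)κ_w}. -/

import Mathlib

open Polynomial

/-- Weighted in-degree Laplacian `L_w = D_w - A_w` of an integer-weighted
simple directed graph: `w i j` is the weight of arc `(j, i)` (zero if no arc),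
`D_w` is diagonal with entries `∑ j, w i j`, and `(A_w) i j = w i j`. -/
noncomputable def lapW (n : ℕ) (w : Fin n → Fin n → ℤ) : Matrix (Fin n) (Fin n) ℂ :=
  Matrix.diagonal (fun i => ∑ j, ((w i j : ℤ) : ℂ)) -
    Matrix.of (fun i j => ((w i j : ℤ) : ℂ))




lemma aux_core {ι : Type*} (T : Finset ι) (a : ι → ℝ) (hpos : ∀ i ∈ T, 0 < a i)
    (hprod : ((1:ℝ)/4) ^ T.card ≤ ∏ i ∈ T, a i) :
    ((T.card : ℝ)/4 ≤ ∑ i ∈ T, a i) ∧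
      (∑ i ∈ T, a i = (T.card : ℝ)/4 → ∀ i ∈ T, a i = 1/4) := by
  have hne : ∀ i ∈ T, (4:ℝ) * a i ≠ 0 := fun i hi => by
    have := hpos i hi; positivity
  have hlogsum : ∑ i ∈ T, Real.log (4 * a i) = Real.log (∏ i ∈ T, (4 * a i)) :=
    (Real.log_prod hne).symm
  have hprod4 : (1:ℝ) ≤ ∏ i ∈ T, (4 * a i) := by
    rw [Finset.prod_mul_distrib, Finset.prod_const]
    calc (1:ℝ) = 4 ^ T.card * (1/4) ^ T.card := by
          rw [← mul_pow]; norm_num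
      _ ≤ 4 ^ T.card * ∏ i ∈ T, a i := by
          apply mul_le_mul_of_nonneg_left hprod; positivity
  have hlognn : 0 ≤ ∑ i ∈ T, Real.log (4 * a i) := by
    rw [hlogsum]; exact Real.log_nonneg hprod4
  have hterm : ∀ i ∈ T, Real.log (4 * a i) ≤ 4 * a i - 1 := fun i hi =>
    Real.log_le_sub_one_of_pos (by have := hpos i hi; positivity)
  have hsum_le : ∑ i ∈ T, Real.log (4 * a i) ≤ ∑ i ∈ T, (4 * a i - 1) :=
    Finset.sum_le_sum hterm
  have hsum_eval : ∑ i ∈ T, (4 * a i - 1) = 4 * (∑ i ∈ T, a i) - T.card := by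
    rw [Finset.sum_sub_distrib, Finset.sum_const, ← Finset.mul_sum]
    simp
  constructor
  · have : (0:ℝ) ≤ 4 * (∑ i ∈ T, a i) - T.card := by
      rw [← hsum_eval]; linarith
    linarith
  · intro heq
    have hzero : ∑ i ∈ T, (4 * a i - 1 - Real.log (4 * a i)) = 0 := by
      rw [Finset.sum_sub_distrib, hsum_eval, heq]
      have h1 : (0:ℝ) ≤ ∑ i ∈ T, Real.log (4 * a i) := hlognn
      have h2 : ∑ i ∈ T, Real.log (4 * a i) ≤ 4 * ((T.card:ℝ)/4) - T.card := by
        rw [← heq, ← hsum_eval]; exact hsum_le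
      have h3 : 4 * ((T.card:ℝ)/4) - (T.card:ℝ) = 0 := by ring
      linarith [le_antisymm (h3 ▸ h2) h1]
    have hallzero := (Finset.sum_eq_zero_iff_of_nonneg
      (fun i hi => by have := hterm i hi; linarith)).mp hzero
    intro i hi
    have h4 : Real.log (4 * a i) = 4 * a i - 1 := by
      have := hallzero i hi; linarith
    by_contra hne14
    have hpos' : 0 < 4 * a i := by have := hpos i hi; positivity
    have hne1 : (4:ℝ) * a i ≠ 1 := fun h => hne14 (by linarith)
    have := Real.log_lt_sub_one_of_pos hpos' hne1
    linarith

lemma aux_two_val {α : Type*} [DecidableEq α] (t : Multiset α) (x y : α) (hxy : x ≠ y)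
    (h : ∀ z ∈ t, z = x ∨ z = y) :
    t = Multiset.replicate (t.count x) x + Multiset.replicate (t.count y) y := by
  ext a
  rw [Multiset.count_add, Multiset.count_replicate, Multiset.count_replicate]
  by_cases hax : x = a
  · subst hax
    rw [if_pos rfl, if_neg (Ne.symm hxy)]
    simp
  · by_cases hay : y = a
    · subst hay
      rw [if_neg hax, if_pos rfl, Nat.zero_add]
    · have hnot : a ∉ t := fun ha => by
        rcases h a ha with h' | h'
        · exact hax h'.symm
        · exact hay h'.symm
      rw [if_neg hax, if_neg hay, Multiset.count_eq_zero.mpr hnot]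

lemma aux_prod_bound (s : Multiset ℂ) (f : ℂ → ℝ) (h0 : ∀ z ∈ s, 0 ≤ f z)
    (h : ∀ z ∈ s, f z ≤ 1/2) :
    (s.map f).prod ≤ (1/2) ^ Multiset.card s := by
  induction s using Multiset.induction with
  | empty => simp
  | cons a t ih =>
    simp only [Multiset.map_cons, Multiset.prod_cons, Multiset.card_cons, pow_succ]
    have h1 := ih (fun z hz => h0 z (Multiset.mem_cons_of_mem hz))
      (fun z hz => h z (Multiset.mem_cons_of_mem hz))
    have h2 : (0:ℝ) ≤ (t.map f).prod := Multiset.prod_nonneg (by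
      intro x hx
      obtain ⟨z, hz, rfl⟩ := Multiset.mem_map.mp hx
      exact h0 z (Multiset.mem_cons_of_mem hz))
    have h3 := h a (Multiset.mem_cons_self a t)
    have h4 := h0 a (Multiset.mem_cons_self a t)
    calc f a * (t.map f).prod ≤ (1/2) * ((1/2) ^ Multiset.card t) := by
          apply mul_le_mul h3 h1 h2 (by norm_num)
      _ = (1/2) ^ Multiset.card t * (1/2) := by ring


lemma aux_half_eval (p : Polynomial ℤ) (hmon : p.Monic) (κ : ℤ) :
    (1:ℝ) ≤ 2 ^ p.natDegree * ‖(p.map (Int.castRingHom ℂ)).eval ((κ:ℂ) + 1/2)‖ := by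
  set d := p.natDegree with hd
  set N : ℤ := ∑ k ∈ Finset.range (d+1), p.coeff k * (2*κ+1)^k * 2^(d-k) with hNdef
  have hdeg : (p.map (Int.castRingHom ℂ)).natDegree = d :=
    p.natDegree_map_eq_of_injective Int.cast_injective
  have hN : (N : ℂ) = 2^d * (p.map (Int.castRingHom ℂ)).eval ((κ:ℂ) + 1/2) := by
    rw [Polynomial.eval_eq_sum_range, hdeg, Finset.mul_sum, hNdef]
    push_cast
    refine Finset.sum_congr rfl ?_
    intro k hk
    have hk' : k ≤ d := Nat.lt_succ_iff.mp (Finset.mem_range.mp hk)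
    rw [Polynomial.coeff_map, eq_intCast]
    have h2 : (2:ℂ)^(d-k) = 2^d / 2^k := pow_sub₀ (2:ℂ) two_ne_zero hk'
    have h3 : ((κ:ℂ) + 1/2) = (2*(κ:ℂ)+1)/2 := by ring
    rw [h2, h3, div_pow]
    have h2k : (2:ℂ)^k ≠ 0 := pow_ne_zero _ two_ne_zero
    field_simp
  have hodd : Odd N := by
    have hsplit : N = (∑ k ∈ Finset.range d, p.coeff k * (2*κ+1)^k * 2^(d-k)) + (2*κ+1)^d := by
      rw [hNdef, Finset.sum_range_succ, hmon.coeff_natDegree]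
      simp
    rw [hsplit]
    refine Even.add_odd ?_ (Odd.pow ⟨κ, by ring⟩)
    rw [even_iff_two_dvd]
    refine Finset.dvd_sum ?_
    intro k hk
    have hk' : k < d := Finset.mem_range.mp hk
    have : (2:ℤ)^(d-k) = 2 * 2^(d-k-1) := by
      rw [← pow_succ']
      congr 1
      omega
    exact ⟨p.coeff k * (2*κ+1)^k * 2^(d-k-1), by rw [this]; ring⟩
  have hNne : N ≠ 0 := by
    intro h
    rw [h] at hodd
    exact (Int.not_odd_iff_even.mpr Even.zero) hodd
  have h1 : (1:ℝ) ≤ |(N:ℝ)| := by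
    have := Int.one_le_abs hNne
    calc (1:ℝ) = ((1:ℤ):ℝ) := by norm_num
      _ ≤ ((|N|:ℤ):ℝ) := by exact_mod_cast this
      _ = |(N:ℝ)| := by push_cast; ring
  calc (1:ℝ) ≤ |(N:ℝ)| := h1
    _ = ‖((N:ℤ):ℂ)‖ := by rw [Complex.norm_intCast]
    _ = ‖(2:ℂ)^d * (p.map (Int.castRingHom ℂ)).eval ((κ:ℂ) + 1/2)‖ := by rw [hN]
    _ = 2 ^ d * ‖(p.map (Int.castRingHom ℂ)).eval ((κ:ℂ) + 1/2)‖ := by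
        rw [norm_mul, norm_pow, Complex.norm_two]

lemma aux_circle_roots (κ : ℤ) : ∀ (N : ℕ) (s : Multiset ℂ) (p : Polynomial ℤ),
    Multiset.card s = N →
    p.map (Int.castRingHom ℂ) = (s.map (fun z => X - C z)).prod →
    (∀ z ∈ s, ‖z - ((κ:ℂ) + 1/2)‖ ^ 2 = 1/4) →
    ∀ z ∈ s, z = (κ:ℂ) ∨ z = (κ:ℂ) + 1 := by
  intro N
  induction N with
  | zero =>
    intro s p hcard _ _ z hz
    rw [Multiset.card_eq_zero] at hcard
    subst hcard
    simp at hz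
  | succ k ih =>
    intro s p hcard hp hcirc
    have heval : ∀ c : ℤ, ((p.eval c : ℤ) : ℂ) = (s.map (fun z => ((c:ℤ):ℂ) - z)).prod := by
      intro c
      have h1 : (p.map (Int.castRingHom ℂ)).eval ((Int.castRingHom ℂ) c)
          = (Int.castRingHom ℂ) (p.eval c) := by
        rw [Polynomial.eval_map, Polynomial.eval₂_at_apply]
      rw [show ((p.eval c : ℤ) : ℂ) = (Int.castRingHom ℂ) (p.eval c) from rfl, ← h1, hp,
        Polynomial.eval_multiset_prod, Multiset.map_map]
      congr 1
      apply Multiset.map_congr rfl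
      intro z _
      simp
    have hfacb : ∀ z ∈ s, ‖(((κ:ℤ):ℂ) - z) * ((((κ+1):ℤ):ℂ) - z)‖ ≤ 1/2 := by
      intro z hz
      have h1 : (((κ:ℤ):ℂ) - z) * ((((κ+1):ℤ):ℂ) - z)
          = (z - ((κ:ℂ) + 1/2))^2 - (1/2:ℂ)^2 := by push_cast; ring
      rw [h1, sub_eq_add_neg]
      calc ‖(z - ((κ:ℂ) + 1/2))^2 + -((1/2:ℂ)^2)‖
          ≤ ‖(z - ((κ:ℂ) + 1/2))^2‖ + ‖-((1/2:ℂ)^2)‖ :=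
            norm_add_le _ _
        _ = ‖z - ((κ:ℂ) + 1/2)‖^2 + ‖(1/2:ℂ)^2‖ := by
            rw [norm_neg, norm_pow]
        _ = 1/4 + 1/4 := by
            rw [hcirc z hz, norm_pow, norm_div, norm_one, Complex.norm_two]
            norm_num
        _ = 1/2 := by norm_num
    have hABle : ‖((p.eval κ * p.eval (κ+1) : ℤ) : ℂ)‖ ≤ (1/2)^(k+1) := by
      have e1 : ((p.eval κ * p.eval (κ+1) : ℤ) : ℂ)
          = (s.map (fun z => (((κ:ℤ):ℂ) - z) * ((((κ+1):ℤ):ℂ) - z))).prod := by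
        rw [Int.cast_mul, heval κ, heval (κ+1), ← Multiset.prod_map_mul]
      have hnm : ∀ t : Multiset ℂ, ‖t.prod‖ = (t.map (fun x => ‖x‖)).prod := fun t => by
        induction t using Multiset.induction <;> simp [*]
      rw [e1, hnm, Multiset.map_map, ← hcard]
      exact aux_prod_bound s _ (fun z _ => norm_nonneg _) hfacb
    have hZ : p.eval κ * p.eval (κ + 1) = 0 := by
      by_contra hne
      have h1 : (1:ℤ) ≤ |p.eval κ * p.eval (κ+1)| := Int.one_le_abs hne
      have h2 : (1:ℝ) ≤ ‖(((p.eval κ * p.eval (κ+1) : ℤ)) : ℂ)‖ := by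
        rw [Complex.norm_intCast]
        exact_mod_cast h1
      have h3 : ((1:ℝ)/2)^(k+1) < 1 := by
        apply pow_lt_one₀ <;> norm_num
      linarith
    have hc : ∃ c : ℤ, (c = κ ∨ c = κ+1) ∧ p.eval c = 0 := by
      rcases mul_eq_zero.mp hZ with hA | hA
      · exact ⟨κ, Or.inl rfl, hA⟩
      · exact ⟨κ+1, Or.inr rfl, hA⟩
    obtain ⟨c, hcor, hceval⟩ := hc
    have hprod0 : (s.map (fun z => ((c:ℤ):ℂ) - z)).prod = 0 := by
      rw [← heval, hceval, Int.cast_zero]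
    have hmem0 : (0:ℂ) ∈ s.map (fun z => ((c:ℤ):ℂ) - z) := by
      rwa [← Multiset.prod_eq_zero_iff]
    obtain ⟨w, hw, hweq⟩ := Multiset.mem_map.mp hmem0
    have hwc : w = ((c:ℤ):ℂ) := by
      have := sub_eq_zero.mp hweq
      exact this.symm
    have hdvd : (X - C c) ∣ p := Polynomial.dvd_iff_isRoot.mpr hceval
    obtain ⟨p', hp'⟩ := hdvd
    have hserase : s = w ::ₘ s.erase w := (Multiset.cons_erase hw).symm
    have hmapeq : (X - C ((c:ℤ):ℂ)) * (p'.map (Int.castRingHom ℂ))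
        = (X - C ((c:ℤ):ℂ)) * ((s.erase w).map (fun z => X - C z)).prod := by
      have hmm : p.map (Int.castRingHom ℂ) = (X - C ((c:ℤ):ℂ)) * p'.map (Int.castRingHom ℂ) := by
        rw [hp', Polynomial.map_mul, Polynomial.map_sub, Polynomial.map_X, Polynomial.map_C]
        rfl
      have hps : (s.map (fun z => X - C z)).prod
          = (X - C ((c:ℤ):ℂ)) * ((s.erase w).map (fun z => X - C z)).prod := by
        conv_lhs => rw [hserase]
        rw [Multiset.map_cons, Multiset.prod_cons, hwc]
      exact hmm.symm.trans (hp.trans hps)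
    have hcancel : p'.map (Int.castRingHom ℂ) = ((s.erase w).map (fun z => X - C z)).prod :=
      mul_left_cancel₀ (Polynomial.X_sub_C_ne_zero _) hmapeq
    have hcard' : Multiset.card (s.erase w) = k := by
      rw [Multiset.card_erase_of_mem hw, hcard]
      rfl
    have hih := ih (s.erase w) p' hcard' hcancel
      (fun z hz => hcirc z (Multiset.mem_of_mem_erase hz))
    intro z hz
    rw [hserase] at hz
    rcases Multiset.mem_cons.mp hz with hzw | hzmem
    · rw [hzw, hwc]
      rcases hcor with h' | h'
      · left; rw [h']
      · right; rw [h']; push_cast; ring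
    · exact hih z hzmem

set_option maxHeartbeats 1000000 in
lemma aux_main (n : ℕ) (hn : 2 ≤ n) (mw κ : ℤ) (lam : Fin n → ℂ) (i0 : Fin n)
    (q : Polynomial ℤ)
    (hqmap : q.map (Int.castRingHom ℂ) = ∏ i ∈ Finset.univ.erase i0, (X - C (lam i)))
    (hlam0 : lam i0 = 0)
    (hsum : ∑ i ∈ Finset.univ.erase i0, lam i = (mw:ℂ))
    (hκl : ((n:ℝ)-1) * (κ:ℝ) ≤ (mw:ℝ))
    (hκu : (mw:ℝ) < ((n:ℝ)-1) * ((κ:ℝ)+1)) :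
    (((mw : ℝ) - ((n : ℝ) - 1) * (κ : ℝ)) *
        (((n : ℝ) - 1) * ((κ : ℝ) + 1) - (mw : ℝ)) / ((n : ℝ) - 1) ^ 2 ≤
      (∑ i ∈ Finset.univ.erase i0,
        ‖lam i - (((mw : ℝ) / ((n : ℝ) - 1) : ℝ) : ℂ)‖ ^ 2) / ((n : ℝ) - 1)) ∧
    ((∑ i ∈ Finset.univ.erase i0,
        ‖lam i - (((mw : ℝ) / ((n : ℝ) - 1) : ℝ) : ℂ)‖ ^ 2) / ((n : ℝ) - 1) =
      ((mw : ℝ) - ((n : ℝ) - 1) * (κ : ℝ)) *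
        (((n : ℝ) - 1) * ((κ : ℝ) + 1) - (mw : ℝ)) / ((n : ℝ) - 1) ^ 2 ↔
      Multiset.map lam Finset.univ.val =
        0 ::ₘ (Multiset.replicate ((((n : ℤ) - 1) * (κ + 1) - mw).toNat) ((κ : ℤ) : ℂ) +
          Multiset.replicate ((mw - ((n : ℤ) - 1) * κ).toNat) (((κ : ℤ) : ℂ) + 1))) := by
  classical
  have hA : (0:ℝ) < (n:ℝ) - 1 := by
    have h2 : (2:ℝ) ≤ (n:ℝ) := by exact_mod_cast hn
    linarith
  set T : Finset (Fin n) := Finset.univ.erase i0 with hT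
  have hTcard : T.card = n - 1 := by
    rw [hT, Finset.card_erase_of_mem (Finset.mem_univ _), Finset.card_univ, Fintype.card_fin]
  have hTcardR : (T.card : ℝ) = (n:ℝ) - 1 := by
    rw [hTcard, Nat.cast_sub (by omega : 1 ≤ n), Nat.cast_one]
  set μ : ℝ := (mw:ℝ)/((n:ℝ)-1) with hμ
  set θ : ℝ := μ - (κ:ℝ) with hθ
  set s : Multiset ℂ := T.val.map lam with hs
  have hscard : Multiset.card s = n - 1 := by
    rw [hs, Multiset.card_map, ← hTcard]; rfl
  -- multiset version of hqmap
  have hsmul : q.map (Int.castRingHom ℂ) = (s.map (fun z => X - C z)).prod := by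
    rw [hqmap, Finset.prod_eq_multiset_prod, hs, Multiset.map_map]
    rfl
  -- q is monic of degree n-1
  have hmonmap : (q.map (Int.castRingHom ℂ)).Monic := by
    rw [hqmap]
    exact monic_prod_of_monic _ _ (fun i _ => monic_X_sub_C _)
  have hqmonic : q.Monic := by
    have h1 : (Int.castRingHom ℂ) q.leadingCoeff = 1 := by
      rw [← Polynomial.leadingCoeff_map_of_injective Int.cast_injective]
      exact hmonmap
    have h2 : ((q.leadingCoeff : ℤ) : ℂ) = ((1:ℤ):ℂ) := by
      rw [show ((q.leadingCoeff : ℤ):ℂ) = (Int.castRingHom ℂ) q.leadingCoeff from rfl, h1]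
      norm_num
    exact Int.cast_injective h2
  have hqdeg : q.natDegree = n - 1 := by
    have hmd := Polynomial.natDegree_map_eq_of_injective
      (f := Int.castRingHom ℂ) Int.cast_injective q
    rw [hsmul, Polynomial.natDegree_multiset_prod_X_sub_C_eq_card, hscard] at hmd
    exact hmd.symm
  -- the "a" function
  set a : Fin n → ℝ := fun i => ‖lam i - ((κ:ℂ)+1/2)‖^2 with ha
  -- product lower bound
  have hprodabs : ∏ i ∈ T, ‖((κ:ℂ)+1/2) - lam i‖
      = ‖(q.map (Int.castRingHom ℂ)).eval ((κ:ℂ)+1/2)‖ := by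
    rw [hqmap, Polynomial.eval_prod, norm_prod]
    refine Finset.prod_congr rfl ?_
    intro i _
    simp
  have habs_half : (1:ℝ)/2^(n-1) ≤ ∏ i ∈ T, ‖((κ:ℂ)+1/2) - lam i‖ := by
    rw [hprodabs]
    have h1 := aux_half_eval q hqmonic κ
    rw [hqdeg] at h1
    rw [div_le_iff₀ (by positivity), mul_comm]
    linarith
  have hprodA : ((1:ℝ)/4)^T.card ≤ ∏ i ∈ T, a i := by
    have h2 : ∏ i ∈ T, a i = (∏ i ∈ T, ‖((κ:ℂ)+1/2) - lam i‖)^2 := by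
      rw [← Finset.prod_pow]
      refine Finset.prod_congr rfl ?_
      intro i _
      rw [ha]
      rw [norm_sub_rev]
    rw [h2, hTcard]
    have h4 : ((1:ℝ)/4)^(n-1) = ((1:ℝ)/2^(n-1))^2 := by
      rw [div_pow, div_pow, one_pow, one_pow, ← pow_mul,
        show (4:ℝ) = 2^2 from by norm_num, ← pow_mul, Nat.mul_comm]
    rw [h4]
    exact pow_le_pow_left₀ (by positivity) habs_half 2
  have hpos : ∀ i ∈ T, 0 < a i := by
    intro i hi
    rcases lt_or_eq_of_le (show (0:ℝ) ≤ a i from by rw [ha]; exact sq_nonneg _) with h | h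
    · exact h
    · exfalso
      have hz : ∏ j ∈ T, a j = 0 := Finset.prod_eq_zero hi h.symm
      have hgt : (0:ℝ) < ((1:ℝ)/4)^T.card := by positivity
      rw [hz] at hprodA
      linarith
  have core := aux_core T a hpos hprodA
  -- real parts
  have hre : ∑ i ∈ T, (lam i).re = (mw:ℝ) := by
    have h1 := congrArg Complex.re hsum
    rw [Complex.re_sum] at h1
    simpa using h1
  -- pointwise identity
  have hcenter : ((κ:ℂ)+1/2) = ((((κ:ℝ)+1/2 : ℝ)):ℂ) := by push_cast; ring
  have hptwise : ∀ i ∈ T, ‖lam i - (μ:ℂ)‖^2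
      = a i + ((1-2*θ) * ((lam i).re - (κ:ℝ)) + (θ^2 - 1/4)) := by
    intro i _
    have e1 : ‖lam i - (μ:ℂ)‖^2 = ((lam i).re - μ)^2 + (lam i).im^2 := by
      rw [Complex.sq_norm, Complex.normSq_apply]
      simp [Complex.sub_re, Complex.sub_im, Complex.ofReal_re, Complex.ofReal_im]
      ring
    have e2 : a i = ((lam i).re - ((κ:ℝ)+1/2))^2 + (lam i).im^2 := by
      rw [ha]
      simp only []
      rw [hcenter, Complex.sq_norm, Complex.normSq_apply]
      simp [Complex.sub_re, Complex.sub_im, Complex.ofReal_re, Complex.ofReal_im]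
      ring
    rw [e1, e2, hθ]
    ring
  have key : ∑ i ∈ T, ‖lam i - (μ:ℂ)‖^2
      = (∑ i ∈ T, a i) - ((n:ℝ)-1)/4 + ((n:ℝ)-1)*(θ*(1-θ)) := by
    rw [Finset.sum_congr rfl hptwise, Finset.sum_add_distrib]
    have h1 : ∑ i ∈ T, ((lam i).re - (κ:ℝ)) = (mw:ℝ) - ((n:ℝ)-1)*(κ:ℝ) := by
      rw [Finset.sum_sub_distrib, hre, Finset.sum_const, nsmul_eq_mul, hTcardR]
    have h2 : ∑ i ∈ T, ((1-2*θ) * ((lam i).re - (κ:ℝ)) + (θ^2 - 1/4))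
        = (1-2*θ) * ((mw:ℝ) - ((n:ℝ)-1)*(κ:ℝ)) + ((n:ℝ)-1)*(θ^2 - 1/4) := by
      rw [Finset.sum_add_distrib, ← Finset.mul_sum, h1, Finset.sum_const, nsmul_eq_mul, hTcardR]
    rw [h2]
    have hAθ : ((n:ℝ)-1)*θ = (mw:ℝ) - ((n:ℝ)-1)*(κ:ℝ) := by
      rw [hθ, hμ]
      field_simp
    rw [← hAθ]
    ring
  have hB : ((mw : ℝ) - ((n : ℝ) - 1) * (κ : ℝ)) *
      (((n : ℝ) - 1) * ((κ : ℝ) + 1) - (mw : ℝ)) / ((n : ℝ) - 1) ^ 2 = θ*(1-θ) := by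
    rw [hθ, hμ]
    field_simp
    ring
  constructor
  · -- inequality
    rw [hB, le_div_iff₀ hA, key]
    have h1 : ((n:ℝ)-1)/4 ≤ ∑ i ∈ T, a i := by
      rw [← hTcardR]
      exact core.1
    nlinarith
  constructor
  · -- equality → multiset
    intro heqn
    rw [key, hB] at heqn
    have hsum4 : ∑ i ∈ T, a i = (T.card:ℝ)/4 := by
      rw [hTcardR]
      rw [div_eq_iff (ne_of_gt hA)] at heqn
      linear_combination heqn
    have hall : ∀ i ∈ T, a i = 1/4 := core.2 hsum4
    have hcircle : ∀ z ∈ s, z = (κ:ℂ) ∨ z = (κ:ℂ)+1 := by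
      apply aux_circle_roots κ (Multiset.card s) s q rfl hsmul
      intro z hz
      obtain ⟨i, hi, rfl⟩ := Multiset.mem_map.mp hz
      exact hall i (Finset.mem_val.mp hi)
    set c0 : ℕ := s.count ((κ:ℂ)) with hc0def
    set c1 : ℕ := s.count ((κ:ℂ)+1) with hc1def
    have hne : ((κ:ℂ)) ≠ (κ:ℂ)+1 := by
      intro h
      have := congrArg Complex.re h
      simp at this
    have hdecomp : s = Multiset.replicate c0 ((κ:ℂ)) + Multiset.replicate c1 ((κ:ℂ)+1) :=
      aux_two_val s _ _ hne hcircle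
    have hc01 : c0 + c1 = n - 1 := by
      have := congrArg Multiset.card hdecomp
      rw [hscard, Multiset.card_add, Multiset.card_replicate, Multiset.card_replicate] at this
      omega
    have hssum : s.sum = (mw:ℂ) := by
      rw [hs]
      exact hsum
    have hZeq : (c0:ℤ)*κ + (c1:ℤ)*(κ+1) = mw := by
      have h1 := congrArg Multiset.sum hdecomp
      rw [hssum, Multiset.sum_add, Multiset.sum_replicate, Multiset.sum_replicate,
        nsmul_eq_mul, nsmul_eq_mul] at h1
      exact_mod_cast h1.symm
    have hc01' : (c0:ℤ) + (c1:ℤ) = (n:ℤ) - 1 := by omega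
    have hc1 : (c1:ℤ) = mw - ((n:ℤ)-1)*κ := by linear_combination hZeq - κ * hc01'
    have hc0 : (c0:ℤ) = ((n:ℤ)-1)*(κ+1) - mw := by linear_combination hc01' - hc1
    have ht0 : (((n:ℤ)-1)*(κ+1) - mw).toNat = c0 := by
      rw [← hc0]
      simp
    have ht1 : (mw - ((n:ℤ)-1)*κ).toNat = c1 := by
      rw [← hc1]
      simp
    have huniv : (Finset.univ : Finset (Fin n)).val = i0 ::ₘ T.val := by
      rw [hT, Finset.erase_val]
      exact (Multiset.cons_erase (Finset.mem_val.mpr (Finset.mem_univ i0))).symm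
    calc Multiset.map lam Finset.univ.val = lam i0 ::ₘ s := by
          rw [huniv, Multiset.map_cons, hs]
      _ = 0 ::ₘ (Multiset.replicate ((((n : ℤ) - 1) * (κ + 1) - mw).toNat) ((κ : ℤ) : ℂ) +
          Multiset.replicate ((mw - ((n : ℤ) - 1) * κ).toNat) (((κ : ℤ) : ℂ) + 1)) := by
          rw [hlam0, ht0, ht1, ← hdecomp]
  · -- multiset → equality
    intro hmult
    set f : ℂ → ℝ := fun z => ‖z - (μ:ℂ)‖^2 with hf
    have hge0 : (0:ℤ) ≤ ((n:ℤ)-1)*(κ+1) - mw := by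
      have h1 : (mw:ℤ) < ((n:ℤ)-1)*(κ+1) := by exact_mod_cast hκu
      omega
    have hge1 : (0:ℤ) ≤ mw - ((n:ℤ)-1)*κ := by
      have h1 : ((n:ℤ)-1)*κ ≤ (mw:ℤ) := by exact_mod_cast hκl
      omega
    have hc0R : (((((n:ℤ)-1)*(κ+1) - mw).toNat : ℕ) : ℝ) = ((n:ℝ)-1)*((κ:ℝ)+1) - (mw:ℝ) := by
      have h1 : (((((n:ℤ)-1)*(κ+1) - mw).toNat : ℕ) : ℤ) = ((n:ℤ)-1)*(κ+1) - mw :=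
        Int.toNat_of_nonneg hge0
      have h2 : (((((n:ℤ)-1)*(κ+1) - mw).toNat : ℕ) : ℝ)
          = ((((((n:ℤ)-1)*(κ+1) - mw).toNat : ℕ) : ℤ) : ℝ) := by push_cast; ring
      rw [h2, h1]
      push_cast
      ring
    have hc1R : (((mw - ((n:ℤ)-1)*κ).toNat : ℕ) : ℝ) = (mw:ℝ) - ((n:ℝ)-1)*(κ:ℝ) := by
      have h1 : (((mw - ((n:ℤ)-1)*κ).toNat : ℕ) : ℤ) = mw - ((n:ℤ)-1)*κ :=
        Int.toNat_of_nonneg hge1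
      have h2 : (((mw - ((n:ℤ)-1)*κ).toNat : ℕ) : ℝ)
          = ((((mw - ((n:ℤ)-1)*κ).toNat : ℕ) : ℤ) : ℝ) := by push_cast; ring
      rw [h2, h1]
      push_cast
      ring
    have hsumu : ∑ i ∈ Finset.univ, f (lam i) = ((Finset.univ.val.map lam).map f).sum := by
      rw [Multiset.map_map]
      rfl
    rw [hmult, Multiset.map_cons, Multiset.map_add, Multiset.map_replicate,
      Multiset.map_replicate, Multiset.sum_cons, Multiset.sum_add,
      Multiset.sum_replicate, Multiset.sum_replicate, nsmul_eq_mul, nsmul_eq_mul] at hsumu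
    have hTs : ∑ i ∈ T, f (lam i)
        = ((((n:ℤ)-1)*(κ+1) - mw).toNat : ℝ) * f ((κ:ℂ))
          + ((mw - ((n:ℤ)-1)*κ).toNat : ℝ) * f ((κ:ℂ)+1) := by
      have h2 : f (lam i0) + ∑ i ∈ T, f (lam i) = ∑ i ∈ Finset.univ, f (lam i) := by
        rw [hT]
        exact Finset.add_sum_erase Finset.univ (fun i => f (lam i)) (Finset.mem_univ i0)
      rw [hlam0] at h2
      have h3 : f 0 + ∑ i ∈ T, f (lam i) = f 0 + (((((n:ℤ)-1)*(κ+1) - mw).toNat : ℝ) * f ((κ:ℂ))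
          + ((mw - ((n:ℤ)-1)*κ).toNat : ℝ) * f ((κ:ℂ)+1)) := by
        rw [h2, hsumu]
      linarith [h3]
    have hfk : f ((κ:ℂ)) = ((κ:ℝ) - μ)^2 := by
      rw [hf]
      simp only []
      rw [show ((κ:ℂ) - (μ:ℂ)) = ((((κ:ℝ) - μ):ℝ):ℂ) by push_cast; ring,
        Complex.norm_real, Real.norm_eq_abs, sq_abs]
    have hfk1 : f ((κ:ℂ)+1) = ((κ:ℝ) + 1 - μ)^2 := by
      rw [hf]
      simp only []
      rw [show ((κ:ℂ) + 1 - (μ:ℂ)) = ((((κ:ℝ) + 1 - μ):ℝ):ℂ) by push_cast; ring,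
        Complex.norm_real, Real.norm_eq_abs, sq_abs]
    have hgoal : (∑ i ∈ T, ‖lam i - (μ:ℂ)‖^2) = ∑ i ∈ T, f (lam i) := rfl
    rw [hgoal, hTs, hfk, hfk1, hc0R, hc1R, hμ]
    field_simp
    ring

set_option maxHeartbeats 800000

/-- For any simple integer-weighted directed graph with `n ≥ 2` vertices and
net number of arcs `m_w = ∑ w i j`, the normalized Laplacian eigenvalue spread
satisfies `σ² ≥ (1/(n-1)²)[m_w - (n-1)κ_w][(n-1)(κ_w+1) - m_w]` with
`κ_w = ⌊m_w/(n-1)⌋`, with equality iff the Laplacian spectrum is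
`{0, κ_w with multiplicity (n-1)(κ_w+1) - m_w, κ_w + 1 with multiplicity
m_w - (n-1)κ_w}`. -/
theorem stmt17 (n : ℕ) (hn : 2 ≤ n) (w : Fin n → Fin n → ℤ)
    (hsimple : ∀ i, w i i = 0) (mw : ℤ) (hmw : ∑ i, ∑ j, w i j = mw)
    (lam : Fin n → ℂ) (hfac : (lapW n w).charpoly = ∏ i, (X - C (lam i)))
    (h0 : lam ⟨0, by omega⟩ = 0)
    (κ : ℤ) (hκ : κ = ⌊(mw : ℝ) / ((n : ℝ) - 1)⌋) :
    (((mw : ℝ) - ((n : ℝ) - 1) * (κ : ℝ)) *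
        (((n : ℝ) - 1) * ((κ : ℝ) + 1) - (mw : ℝ)) / ((n : ℝ) - 1) ^ 2 ≤
      (∑ i ∈ Finset.univ.erase (⟨0, by omega⟩ : Fin n),
        ‖lam i - (((mw : ℝ) / ((n : ℝ) - 1) : ℝ) : ℂ)‖ ^ 2) / ((n : ℝ) - 1)) ∧
    ((∑ i ∈ Finset.univ.erase (⟨0, by omega⟩ : Fin n),
        ‖lam i - (((mw : ℝ) / ((n : ℝ) - 1) : ℝ) : ℂ)‖ ^ 2) / ((n : ℝ) - 1) =
      ((mw : ℝ) - ((n : ℝ) - 1) * (κ : ℝ)) *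
        (((n : ℝ) - 1) * ((κ : ℝ) + 1) - (mw : ℝ)) / ((n : ℝ) - 1) ^ 2 ↔
      Multiset.map lam Finset.univ.val =
        0 ::ₘ (Multiset.replicate ((((n : ℤ) - 1) * (κ + 1) - mw).toNat) ((κ : ℤ) : ℂ) +
          Multiset.replicate ((mw - ((n : ℤ) - 1) * κ).toNat) (((κ : ℤ) : ℂ) + 1))) := by
  have hA : (0:ℝ) < (n:ℝ) - 1 := by
    have h2 : (2:ℝ) ≤ (n:ℝ) := by exact_mod_cast hn
    linarith
  set i0 : Fin n := ⟨0, by omega⟩ with hi0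
  have h0' : lam i0 = 0 := h0
  -- integer matrix
  set Mz : Matrix (Fin n) (Fin n) ℤ :=
    Matrix.diagonal (fun i => ∑ j, w i j) - Matrix.of w with hMz
  have hMap : lapW n w = Mz.map (Int.castRingHom ℂ) := by
    ext i j
    by_cases h : i = j <;>
      simp [lapW, hMz, Matrix.map_apply, Matrix.sub_apply, Matrix.diagonal_apply, h,
        Matrix.of_apply]
  have hpmap : Mz.charpoly.map (Int.castRingHom ℂ) = ∏ i, (X - C (lam i)) := by
    rw [← Matrix.charpoly_map, ← hMap, hfac]
  -- trace
  have htrace : (lapW n w).trace = (mw:ℂ) := by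
    rw [Matrix.trace]
    have hdiag : ∀ i, (lapW n w).diag i = ∑ j, ((w i j : ℤ):ℂ) := by
      intro i
      simp [lapW, Matrix.diag, hsimple i]
    rw [Finset.sum_congr rfl (fun i _ => hdiag i), ← hmw]
    push_cast
    rfl
  have hsumall : ∑ i, lam i = (mw:ℂ) := by
    haveI : Nonempty (Fin n) := ⟨i0⟩
    have h1 := Matrix.trace_eq_neg_charpoly_coeff (lapW n w)
    rw [hfac, htrace] at h1
    have h2 := Polynomial.prod_X_sub_C_coeff_card_pred Finset.univ lam
      (by rw [Finset.card_univ, Fintype.card_fin]; omega)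
    rw [Finset.card_univ] at h2
    rw [h2] at h1
    simp only [neg_neg] at h1
    exact h1.symm
  have hsum : ∑ i ∈ Finset.univ.erase i0, lam i = (mw:ℂ) := by
    have h1 : lam i0 + ∑ i ∈ Finset.univ.erase i0, lam i = ∑ i, lam i :=
      Finset.add_sum_erase Finset.univ lam (Finset.mem_univ i0)
    rw [h0', zero_add] at h1
    rw [h1, hsumall]
  -- q: divide by X
  have hcoeff0 : Mz.charpoly.coeff 0 = 0 := by
    have h1 : ((Mz.charpoly.coeff 0 : ℤ) : ℂ) = (Mz.charpoly.map (Int.castRingHom ℂ)).coeff 0 := by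
      rw [Polynomial.coeff_map]
      rfl
    rw [hpmap] at h1
    have h2 : (∏ i, (X - C (lam i))).coeff 0 = ∏ i, (0 - lam i) := by
      rw [Polynomial.coeff_zero_eq_eval_zero, Polynomial.eval_prod]
      refine Finset.prod_congr rfl ?_
      intro i _
      simp
    have h3 : ∏ i, ((0:ℂ) - lam i) = 0 :=
      Finset.prod_eq_zero (Finset.mem_univ i0) (by rw [h0', sub_zero])
    rw [h2, h3] at h1
    exact_mod_cast h1
  obtain ⟨q, hq⟩ := Polynomial.X_dvd_iff.mpr hcoeff0
  have hqmap : q.map (Int.castRingHom ℂ) = ∏ i ∈ Finset.univ.erase i0, (X - C (lam i)) := by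
    have h1 : (X : ℂ[X]) * (q.map (Int.castRingHom ℂ))
        = X * ∏ i ∈ Finset.univ.erase i0, (X - C (lam i)) := by
      have h2 : Mz.charpoly.map (Int.castRingHom ℂ)
          = (X : ℂ[X]) * (q.map (Int.castRingHom ℂ)) := by
        rw [hq, Polynomial.map_mul, Polynomial.map_X]
      rw [← h2, hpmap, ← Finset.mul_prod_erase Finset.univ _ (Finset.mem_univ i0), h0']
      simp
    exact mul_left_cancel₀ Polynomial.X_ne_zero h1
  -- floor bounds
  have hκl : ((n:ℝ)-1) * (κ:ℝ) ≤ (mw:ℝ) := by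
    have h1 : (κ:ℝ) ≤ (mw:ℝ) / ((n:ℝ)-1) := by
      rw [hκ]
      exact Int.floor_le _
    calc ((n:ℝ)-1) * (κ:ℝ) ≤ ((n:ℝ)-1) * ((mw:ℝ) / ((n:ℝ)-1)) :=
          mul_le_mul_of_nonneg_left h1 (le_of_lt hA)
      _ = (mw:ℝ) := by field_simp
  have hκu : (mw:ℝ) < ((n:ℝ)-1) * ((κ:ℝ)+1) := by
    have h1 : (mw:ℝ) / ((n:ℝ)-1) < (κ:ℝ)+1 := by
      rw [hκ]
      exact Int.lt_floor_add_one _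
    calc (mw:ℝ) = ((n:ℝ)-1) * ((mw:ℝ) / ((n:ℝ)-1)) := by field_simp
      _ < ((n:ℝ)-1) * ((κ:ℝ)+1) := by
          exact mul_lt_mul_of_pos_left h1 hA
  exact aux_main n hn mw κ lam i0 q hqmap h0' hsum hκl hκu
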